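/- Let L be a finitely generated free abelian group and v₁, ..., v_ℓ : L → ℤ group homomorphisms. Then the submonoid { x ∈ L : v_i(x) ≥ 0 for all i = 1,...,ℓ } is finitely generated as a monoid. -/

import Mathlib

/-- Dickson's lemma specialized to `ι → ℕ`. -/
lemma pi_nat_isPWO {ι : Type*} [Fintype ι] (T : Set (ι → ℕ)) : T.IsPWO :=
  (Set.IsPWO.pi (fun (_ : ι) => Set.IsPWO.of_linearOrder (Set.univ : Set ℕ))).mono
    (fun x _ => by simp)

/-- A subtraction-closed submonoid of `ι → ℕ` is finitely generated (Gordan/Dickson). -/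
lemma fg_of_sub_closed {ι : Type*} [Fintype ι] (S : AddSubmonoid (ι → ℕ))
    (hsub : ∀ x ∈ S, ∀ y ∈ S, y ≤ x → x - y ∈ S) : S.FG := by
  classical
  set T : Set (ι → ℕ) :=
    {x | x ∈ S ∧ x ≠ 0 ∧ ∀ y ∈ S, y ≠ 0 → y ≤ x → y = x} with hT
  have hanti : IsAntichain (· ≤ ·) T := by
    intro a ha b hb hne hle
    exact hne (hb.2.2 a ha.1 ha.2.1 hle)
  have hfin : T.Finite :=
    hanti.finite_of_partiallyWellOrderedOn (pi_nat_isPWO T)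
  refine ⟨hfin.toFinset, ?_⟩
  rw [hfin.coe_toFinset]
  apply le_antisymm
  · exact AddSubmonoid.closure_le.2 (fun x hx => hx.1)
  · intro x hx
    -- strong induction on the sum of coordinates
    have key : ∀ N : ℕ, ∀ x : ι → ℕ, x ∈ S → (∑ j, x j) = N →
        x ∈ AddSubmonoid.closure T := by
      intro N
      induction N using Nat.strong_induction_on with
      | _ N ih =>
        intro x hxS hsum
        by_cases hx0 : x = 0
        · subst hx0; exact (AddSubmonoid.closure T).zero_mem
        · set P : Set (ι → ℕ) := {y | y ∈ S ∧ y ≠ 0 ∧ y ≤ x} with hP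
          have hPne : P.Nonempty := ⟨x, hxS, hx0, le_refl x⟩
          have hwf : P.IsWF := (pi_nat_isPWO P).isWF
          set m := hwf.min hPne with hm
          have hmP : m ∈ P := hwf.min_mem hPne
          have hmT : m ∈ T := by
            refine ⟨hmP.1, hmP.2.1, fun y hyS hy0 hyle => ?_⟩
            by_contra hne
            have hylt : y < m := lt_of_le_of_ne hyle hne
            exact hwf.not_lt_min hPne ⟨hyS, hy0, le_trans hyle hmP.2.2⟩ hylt
          have hxm : x - m ∈ S := hsub x hxS m hmP.1 hmP.2.2
          have hmlex : m ≤ x := hmP.2.2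
          have hmpos : 0 < ∑ j, m j := by
            rcases Function.ne_iff.1 hmP.2.1 with ⟨j, hj⟩
            exact Finset.sum_pos' (fun i _ => Nat.zero_le _)
              ⟨j, Finset.mem_univ j, Nat.pos_of_ne_zero hj⟩
          have hsum' : (∑ j, (x - m) j) < N := by
            have : ∀ j, (x - m) j = x j - m j := fun j => rfl
            calc (∑ j, (x - m) j) = (∑ j, x j) - (∑ j, m j) := by
                  rw [← Finset.sum_tsub_distrib]
                  · rfl
                  · exact fun i _ => hmlex i
              _ < N := by
                  have h1 : (∑ j, m j) ≤ ∑ j, x j :=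
                    Finset.sum_le_sum (fun i _ => hmlex i)
                  omega
          have hrec := ih _ hsum' (x - m) hxm rfl
          have : (x - m) + m = x := by
            funext j
            exact Nat.sub_add_cancel (hmlex j)
          rw [← this]
          exact (AddSubmonoid.closure T).add_mem hrec (AddSubmonoid.subset_closure hmT)
    exact key (∑ j, x j) x hx rfl

/-- The submonoid of a lattice cut out by finitely many linear inequalities. -/
def nonnegSubmonoid {L : Type*} [AddCommGroup L] {ℓ : ℕ} (v : Fin ℓ → (L →+ ℤ)) :
    AddSubmonoid L where
  carrier := {x | ∀ i, 0 ≤ v i x}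
  zero_mem' := fun i => by simp
  add_mem' := fun {a b} ha hb i => by
    rw [map_add]
    exact add_nonneg (ha i) (hb i)

/-- Gordan's lemma: a subset of a finitely generated free abelian group cut out by
finitely many linear inequalities is a finitely generated monoid. -/
theorem stmt2 {L : Type*} [AddCommGroup L] [Module.Free ℤ L] [Module.Finite ℤ L]
    (ℓ : ℕ) (v : Fin ℓ → (L →+ ℤ)) :
    (nonnegSubmonoid v).FG := by
  classical
  set ι := Module.Free.ChooseBasisIndex ℤ L
  set b : Module.Basis ι ℤ L := Module.Free.chooseBasis ℤ L
  -- the big index type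
  set κ := (ι ⊕ ι ⊕ Fin ℓ)
  -- the monoid hom from ℕ^κ to L
  set φ : (κ → ℕ) →+ L :=
    { toFun := fun d => ∑ i : ι,
        ((d (Sum.inl i) : ℤ) - (d (Sum.inr (Sum.inl i)) : ℤ)) • b i
      map_zero' := by simp
      map_add' := by
        intro d d'
        rw [← Finset.sum_add_distrib]
        refine Finset.sum_congr rfl fun i _ => ?_
        have : ((d + d') (Sum.inl i) : ℤ) - ((d + d') (Sum.inr (Sum.inl i)) : ℤ)
            = ((d (Sum.inl i) : ℤ) - (d (Sum.inr (Sum.inl i)) : ℤ))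
              + ((d' (Sum.inl i) : ℤ) - (d' (Sum.inr (Sum.inl i)) : ℤ)) := by
          push_cast [Pi.add_apply]; ring
        rw [this, add_smul] } with hφ
  -- the equation submonoid
  set E : AddSubmonoid (κ → ℕ) :=
    { carrier := {d | ∀ k, (d (Sum.inr (Sum.inr k)) : ℤ) = v k (φ d)}
      zero_mem' := by intro k; simp
      add_mem' := by
        intro d d' hd hd' k
        rw [map_add, map_add, Pi.add_apply]
        push_cast
        rw [hd k, hd' k] } with hE
  -- E is subtraction closed
  have hEsub : ∀ x ∈ E, ∀ y ∈ E, y ≤ x → x - y ∈ E := by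
    intro x hx y hy hle
    have hφsub : φ (x - y) = φ x - φ y := by
      show (∑ i : ι, _) = (∑ i : ι, _) - (∑ i : ι, _)
      rw [← Finset.sum_sub_distrib]
      refine Finset.sum_congr rfl fun i _ => ?_
      rw [← sub_smul]
      congr 1
      have h1 : ((x - y) (Sum.inl i) : ℤ) = (x (Sum.inl i) : ℤ) - y (Sum.inl i) := by
        have := hle (Sum.inl i)
        exact_mod_cast Int.ofNat_sub this
      have h2 : ((x - y) (Sum.inr (Sum.inl i)) : ℤ)
          = (x (Sum.inr (Sum.inl i)) : ℤ) - y (Sum.inr (Sum.inl i)) := by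
        have := hle (Sum.inr (Sum.inl i))
        exact_mod_cast Int.ofNat_sub this
      rw [h1, h2]; ring
    intro k
    have h3 : ((x - y) (Sum.inr (Sum.inr k)) : ℤ)
        = (x (Sum.inr (Sum.inr k)) : ℤ) - y (Sum.inr (Sum.inr k)) := by
      have := hle (Sum.inr (Sum.inr k))
      exact_mod_cast Int.ofNat_sub this
    rw [h3, hφsub, map_sub, hx k, hy k]
  have hEfg : E.FG := fg_of_sub_closed E hEsub
  -- nonnegSubmonoid v is the image of E under φ
  have himg : nonnegSubmonoid v = E.map φ := by
    apply le_antisymm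
    · intro x hx
      set d : κ → ℕ := fun j =>
        Sum.rec (fun i => (b.repr x i).toNat)
          (Sum.rec (fun i => (-(b.repr x i)).toNat) (fun k => (v k x).toNat)) j with hd
      have hφd : φ d = x := by
        show (∑ i : ι, _) = x
        have : ∀ i : ι, ((d (Sum.inl i) : ℤ) - (d (Sum.inr (Sum.inl i)) : ℤ)) • b i
            = b.repr x i • b i := by
          intro i
          congr 1
          show ((b.repr x i).toNat : ℤ) - ((-(b.repr x i)).toNat : ℤ) = b.repr x i
          exact Int.toNat_sub_toNat_neg _
        rw [Finset.sum_congr rfl (fun i _ => this i)]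
        exact b.sum_repr x
      refine ⟨d, ?_, hφd⟩
      intro k
      rw [hφd]
      show (((v k x).toNat : ℤ)) = v k x
      exact Int.toNat_of_nonneg (hx k)
    · rintro _ ⟨d, hd, rfl⟩
      intro k
      rw [← hd k]
      exact Int.ofNat_nonneg _
  rw [himg]
  exact hEfg.map φ
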